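/- arXiv:1909.05899 — 2 statements merged into one kernel-verified Lean document; each statement's English description precedes it below -/
import Mathlib

section
/- Let $m \geq 0$ be a real number and let $m_2, m_3, m_4, m_7, m_5, m_9$ be nonnegative real numbers with $m_3 \leq m_2$, $m_7 \leq m_4$, $m_5 \leq m_9$, satisfying the pair bounds $m_2+m_3 \leq m$, $m_4+m_7 \leq m$, $m_5+m_9 \leq m$, and the giant bound $m_2+m_4+m_9 \leq 1$. Then $m_2^2+m_3^2+m_4^2+m_7^2+m_5^2+m_9^2 \leq m$. -/
theorem giants_estimate
    (m : ℝ) (hm : 0 ≤ m)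
    (m₂ m₃ m₄ m₇ m₅ m₉ : ℝ)
    (h₂ : 0 ≤ m₂) (h₃ : 0 ≤ m₃) (h₄ : 0 ≤ m₄) (h₇ : 0 ≤ m₇) (h₅ : 0 ≤ m₅) (h₉ : 0 ≤ m₉)
    (g₁ : m₃ ≤ m₂) (g₂ : m₇ ≤ m₄) (g₃ : m₅ ≤ m₉)
    (p₁ : m₂ + m₃ ≤ m) (p₂ : m₄ + m₇ ≤ m) (p₃ : m₅ + m₉ ≤ m)
    (giants : m₂ + m₄ + m₉ ≤ 1) :
    m₂ ^ 2 + m₃ ^ 2 + m₄ ^ 2 + m₇ ^ 2 + m₅ ^ 2 + m₉ ^ 2 ≤ m := by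
  nlinarith [mul_nonneg h₃ (sub_nonneg.2 g₁), mul_nonneg h₇ (sub_nonneg.2 g₂),
    mul_nonneg h₅ (sub_nonneg.2 g₃), mul_nonneg hm (sub_nonneg.2 p₁),
    mul_nonneg hm (sub_nonneg.2 p₂), mul_nonneg hm (sub_nonneg.2 p₃),
    mul_nonneg h₂ (sub_nonneg.2 p₁), mul_nonneg h₄ (sub_nonneg.2 p₂),
    mul_nonneg h₉ (sub_nonneg.2 p₃), mul_nonneg hm (sub_nonneg.2 giants)]
end

section
/- Let $\varepsilon \in \mathbb{C}$ be a primitive cube root of unity and consider the nine lines in $\mathbb{P}^2(\mathbb{C})$ given by the linear forms $x - \varepsilon^c y$, $y - \varepsilon^c z$, $z - \varepsilon^c x$ for $c \in \{0,1,2\}$ (the linear factors of $(x^3-y^3)(y^3-z^3)(z^3-x^3)$). Then the set of points of $\mathbb{P}^2(\mathbb{C})$ lying on at least two of these nine lines has exactly $12$ elements, namely the nine points $(\varepsilon^a : \varepsilon^b : 1)$ with $a, b \in \{0,1,2\}$ together with the three coordinate points $(1:0:0)$, $(0:1:0)$, $(0:0:1)$. -/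
/-- The nine linear forms `x - ε^c y`, `y - ε^c z`, `z - ε^c x` (for `c ∈ {0,1,2}`),
the linear factors of the Fermat polynomial `(x³-y³)(y³-z³)(z³-x³)`,
evaluated at a vector `v ∈ ℂ³`. The first index selects the type of form,
the second index is the exponent `c`. -/
def fermatForm (ε : ℂ) (p : Fin 3 × Fin 3) (v : Fin 3 → ℂ) : ℂ :=
  ![v 0 - ε ^ (p.2 : ℕ) * v 1,
    v 1 - ε ^ (p.2 : ℕ) * v 2,
    v 2 - ε ^ (p.2 : ℕ) * v 0] p.1

/-- A point of `ℙ²(ℂ)` lies on the line cut out by the `p`-th linear form of the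
dual Hesse arrangement if the form vanishes on a (hence any) representing vector. -/
def onFermatLine (ε : ℂ) (p : Fin 3 × Fin 3) (P : Projectivization ℂ (Fin 3 → ℂ)) : Prop :=
  fermatForm ε p P.rep = 0

namespace DualHesse

open Projectivization

variable {ε : ℂ}

lemma pow_mod3 (h3 : ε ^ 3 = 1) (k : ℕ) : ε ^ (k % 3) = ε ^ k := by
  conv_rhs => rw [← Nat.mod_add_div k 3]
  rw [pow_add, pow_mul, h3, one_pow, mul_one]

lemma pow_fin_add (h3 : ε ^ 3 = 1) (a b : Fin 3) :
    ε ^ (((a + b) : Fin 3) : ℕ) = ε ^ (a : ℕ) * ε ^ (b : ℕ) := by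
  rw [Fin.val_add, pow_mod3 h3, pow_add]

lemma pow_neg_mul (h3 : ε ^ 3 = 1) (a : Fin 3) :
    ε ^ ((-a : Fin 3) : ℕ) * ε ^ (a : ℕ) = 1 := by
  rw [← pow_fin_add h3, neg_add_cancel]
  simp

/-- One of the nine triple points `(ε^a : ε^b : 1)`. -/
noncomputable def ninePt (ε : ℂ) (a b : Fin 3) : Projectivization ℂ (Fin 3 → ℂ) :=
  Projectivization.mk ℂ ![ε ^ (a : ℕ), ε ^ (b : ℕ), 1] (by intro h; simpa using congrFun h 2)

noncomputable def e₀ : Projectivization ℂ (Fin 3 → ℂ) :=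
  Projectivization.mk ℂ ![1, 0, 0] (by intro h; simpa using congrFun h 0)

noncomputable def e₁ : Projectivization ℂ (Fin 3 → ℂ) :=
  Projectivization.mk ℂ ![0, 1, 0] (by intro h; simpa using congrFun h 1)

noncomputable def e₂ : Projectivization ℂ (Fin 3 → ℂ) :=
  Projectivization.mk ℂ ![0, 0, 1] (by intro h; simpa using congrFun h 2)

/-- Enumeration of the 12 singular points. -/
noncomputable def g (ε : ℂ) : (Fin 3 × Fin 3) ⊕ Fin 3 → Projectivization ℂ (Fin 3 → ℂ)
  | .inl ab => ninePt ε ab.1 ab.2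
  | .inr i => ![e₀, e₁, e₂] i

lemma fermatForm_smul (ε : ℂ) (p : Fin 3 × Fin 3) (a : ℂ) (v : Fin 3 → ℂ) :
    fermatForm ε p (a • v) = a * fermatForm ε p v := by
  obtain ⟨i, c⟩ := p
  fin_cases i <;> simp [fermatForm] <;> ring

lemma onFermatLine_mk (ε : ℂ) (p : Fin 3 × Fin 3) (v : Fin 3 → ℂ) (hv : v ≠ 0) :
    onFermatLine ε p (Projectivization.mk ℂ v hv) ↔ fermatForm ε p v = 0 := by
  obtain ⟨a, ha⟩ := Projectivization.exists_smul_eq_mk_rep ℂ v hv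
  unfold onFermatLine
  rw [← ha, show ((a • v : Fin 3 → ℂ)) = ((a : ℂ) • v) from rfl, fermatForm_smul]
  simp [a.ne_zero]

lemma mk_eq_ninePt {v : Fin 3 → ℂ} (hv : v ≠ 0) (a b : Fin 3) (h2 : v 2 ≠ 0)
    (h0 : v 0 = ε ^ (a : ℕ) * v 2) (h1 : v 1 = ε ^ (b : ℕ) * v 2) :
    Projectivization.mk ℂ v hv = ninePt ε a b := by
  rw [ninePt, Projectivization.mk_eq_mk_iff']
  exact ⟨v 2, by funext i; fin_cases i <;> simp [h0, h1, mul_comm]⟩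

lemma mk_eq_e₀ {v : Fin 3 → ℂ} (hv : v ≠ 0) (h1 : v 1 = 0) (h2 : v 2 = 0) :
    Projectivization.mk ℂ v hv = e₀ := by
  rw [e₀, Projectivization.mk_eq_mk_iff']
  exact ⟨v 0, by funext i; fin_cases i <;> simp [h1, h2]⟩

lemma mk_eq_e₁ {v : Fin 3 → ℂ} (hv : v ≠ 0) (h0 : v 0 = 0) (h2 : v 2 = 0) :
    Projectivization.mk ℂ v hv = e₁ := by
  rw [e₁, Projectivization.mk_eq_mk_iff']
  exact ⟨v 1, by funext i; fin_cases i <;> simp [h0, h2]⟩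

lemma mk_eq_e₂ {v : Fin 3 → ℂ} (hv : v ≠ 0) (h0 : v 0 = 0) (h1 : v 1 = 0) :
    Projectivization.mk ℂ v hv = e₂ := by
  rw [e₂, Projectivization.mk_eq_mk_iff']
  exact ⟨v 2, by funext i; fin_cases i <;> simp [h0, h1]⟩

lemma pow_inj' (hε : IsPrimitiveRoot ε 3) {c d : Fin 3}
    (h : ε ^ (c : ℕ) = ε ^ (d : ℕ)) : c = d :=
  Fin.ext (hε.pow_inj c.isLt d.isLt h)

section cases

variable {v : Fin 3 → ℂ} (hv : v ≠ 0)

lemma case00 (hε : IsPrimitiveRoot ε 3) {c d : Fin 3} (hcd : c ≠ d)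
    (hc : v 0 = ε ^ (c : ℕ) * v 1) (hd : v 0 = ε ^ (d : ℕ) * v 1) :
    Projectivization.mk ℂ v hv = e₂ := by
  have h1 : v 1 = 0 := by
    by_contra h
    exact hcd (pow_inj' hε (mul_right_cancel₀ h (hc.symm.trans hd)))
  exact mk_eq_e₂ hv (by rw [hc, h1, mul_zero]) h1

lemma case11 (hε : IsPrimitiveRoot ε 3) {c d : Fin 3} (hcd : c ≠ d)
    (hc : v 1 = ε ^ (c : ℕ) * v 2) (hd : v 1 = ε ^ (d : ℕ) * v 2) :
    Projectivization.mk ℂ v hv = e₀ := by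
  have h2 : v 2 = 0 := by
    by_contra h
    exact hcd (pow_inj' hε (mul_right_cancel₀ h (hc.symm.trans hd)))
  exact mk_eq_e₀ hv (by rw [hc, h2, mul_zero]) h2

lemma case22 (hε : IsPrimitiveRoot ε 3) {c d : Fin 3} (hcd : c ≠ d)
    (hc : v 2 = ε ^ (c : ℕ) * v 0) (hd : v 2 = ε ^ (d : ℕ) * v 0) :
    Projectivization.mk ℂ v hv = e₁ := by
  have h0 : v 0 = 0 := by
    by_contra h
    exact hcd (pow_inj' hε (mul_right_cancel₀ h (hc.symm.trans hd)))
  exact mk_eq_e₁ hv h0 (by rw [hc, h0, mul_zero])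

lemma case01 (h3 : ε ^ 3 = 1) (c d : Fin 3)
    (e01 : v 0 = ε ^ (c : ℕ) * v 1) (e12 : v 1 = ε ^ (d : ℕ) * v 2) :
    ∃ a b, Projectivization.mk ℂ v hv = ninePt ε a b := by
  refine ⟨c + d, d, ?_⟩
  have h2 : v 2 ≠ 0 := by
    intro h
    exact hv (funext fun i => by fin_cases i <;> simp [e01, e12, h])
  refine mk_eq_ninePt hv _ _ h2 ?_ e12
  rw [pow_fin_add h3, e01, e12]; ring

lemma case02 (h3 : ε ^ 3 = 1) (hne0 : ε ≠ 0) (c d : Fin 3)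
    (e01 : v 0 = ε ^ (c : ℕ) * v 1) (e20 : v 2 = ε ^ (d : ℕ) * v 0) :
    ∃ a b, Projectivization.mk ℂ v hv = ninePt ε a b := by
  refine ⟨-d, -d + -c, ?_⟩
  have h2 : v 2 ≠ 0 := by
    intro h
    have h0 : v 0 = 0 := by
      have := h ▸ e20
      rcases mul_eq_zero.1 this.symm with h' | h'
      · exact absurd h' (pow_ne_zero _ hne0)
      · exact h'
    have h1 : v 1 = 0 := by
      have := h0 ▸ e01
      rcases mul_eq_zero.1 this.symm with h' | h'
      · exact absurd h' (pow_ne_zero _ hne0)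
      · exact h'
    exact hv (funext fun i => by fin_cases i <;> assumption)
  refine mk_eq_ninePt hv _ _ h2 ?_ ?_
  · rw [e20, ← mul_assoc, pow_neg_mul h3, one_mul]
  · rw [pow_fin_add h3, e20, e01]
    have hc := pow_neg_mul h3 c
    have hd := pow_neg_mul h3 d
    calc v 1 = (ε ^ ((-d : Fin 3) : ℕ) * ε ^ (d : ℕ)) *
          ((ε ^ ((-c : Fin 3) : ℕ) * ε ^ (c : ℕ)) * v 1) := by rw [hc, hd]; ring
      _ = ε ^ ((-d : Fin 3) : ℕ) * ε ^ ((-c : Fin 3) : ℕ) *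
          (ε ^ (d : ℕ) * (ε ^ (c : ℕ) * v 1)) := by ring

lemma case12 (h3 : ε ^ 3 = 1) (hne0 : ε ≠ 0) (c d : Fin 3)
    (e12 : v 1 = ε ^ (c : ℕ) * v 2) (e20 : v 2 = ε ^ (d : ℕ) * v 0) :
    ∃ a b, Projectivization.mk ℂ v hv = ninePt ε a b := by
  refine ⟨-d, c, ?_⟩
  have h2 : v 2 ≠ 0 := by
    intro h
    have h0 : v 0 = 0 := by
      have := h ▸ e20
      rcases mul_eq_zero.1 this.symm with h' | h'
      · exact absurd h' (pow_ne_zero _ hne0)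
      · exact h'
    have h1 : v 1 = 0 := by rw [e12, h, mul_zero]
    exact hv (funext fun i => by fin_cases i <;> assumption)
  refine mk_eq_ninePt hv _ _ h2 ?_ e12
  rw [e20, ← mul_assoc, pow_neg_mul h3, one_mul]

/-- Any point on two distinct lines is one of the 12 points. -/
lemma main_forward (hε : IsPrimitiveRoot ε 3) (p q : Fin 3 × Fin 3) (hpq : p ≠ q)
    (hp : fermatForm ε p v = 0) (hq : fermatForm ε q v = 0) :
    (∃ a b, Projectivization.mk ℂ v hv = ninePt ε a b) ∨
      Projectivization.mk ℂ v hv = e₀ ∨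
      Projectivization.mk ℂ v hv = e₁ ∨
      Projectivization.mk ℂ v hv = e₂ := by
  have h3 : ε ^ 3 = 1 := hε.pow_eq_one
  have hne0 : ε ≠ 0 := hε.ne_zero (by norm_num)
  obtain ⟨i, c⟩ := p
  obtain ⟨j, d⟩ := q
  fin_cases i <;> fin_cases j <;>
    simp [fermatForm, sub_eq_zero] at hp hq
  · exact Or.inr (Or.inr (Or.inr (case00 hv hε (by simpa using hpq) hp hq)))
  · exact Or.inl (case01 hv h3 c d hp hq)
  · exact Or.inl (case02 hv h3 hne0 c d hp hq)
  · exact Or.inl (case01 hv h3 d c hq hp)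
  · exact Or.inr (Or.inl (case11 hv hε (by simpa using hpq) hp hq))
  · exact Or.inl (case12 hv h3 hne0 c d hp hq)
  · exact Or.inl (case02 hv h3 hne0 d c hq hp)
  · exact Or.inl (case12 hv h3 hne0 d c hq hp)
  · exact Or.inr (Or.inr (Or.inl (case22 hv hε (by simpa using hpq) hp hq)))

end cases

section backward

lemma two_le_ncard {P : Projectivization ℂ (Fin 3 → ℂ)} (p q : Fin 3 × Fin 3)
    (hpq : p ≠ q) (hp : onFermatLine ε p P) (hq : onFermatLine ε q P) :
    2 ≤ Set.ncard {r : Fin 3 × Fin 3 | onFermatLine ε r P} :=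
  (Set.one_lt_ncard_iff (Set.toFinite _)).2 ⟨p, q, hp, hq, hpq⟩

lemma on_ninePt (h3 : ε ^ 3 = 1) (a b : Fin 3) :
    onFermatLine ε (1, b) (ninePt ε a b) ∧ onFermatLine ε (2, -a) (ninePt ε a b) := by
  rw [ninePt]
  constructor <;> rw [onFermatLine_mk] <;> simp [fermatForm, pow_neg_mul h3]

lemma on_e₀ (c : Fin 3) : onFermatLine ε (1, c) e₀ := by
  rw [e₀, onFermatLine_mk]; simp [fermatForm]

lemma on_e₁ (c : Fin 3) : onFermatLine ε (2, c) e₁ := by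
  rw [e₁, onFermatLine_mk]; simp [fermatForm]

lemma on_e₂ (c : Fin 3) : onFermatLine ε (0, c) e₂ := by
  rw [e₂, onFermatLine_mk]; simp [fermatForm]

end backward

section inj

lemma mk_ne_mk (v w : Fin 3 → ℂ) (hv : v ≠ 0) (hw : w ≠ 0) (k : Fin 3)
    (h1 : w k = 0) (h2 : v k ≠ 0) :
    Projectivization.mk ℂ v hv ≠ Projectivization.mk ℂ w hw := by
  intro h
  obtain ⟨t, ht⟩ := (Projectivization.mk_eq_mk_iff' ℂ v w hv hw).1 h
  have := congrFun ht k
  rw [Pi.smul_apply, smul_eq_mul, h1, mul_zero] at this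
  exact h2 this.symm

lemma nine_ne_e (hne0 : ε ≠ 0) (a b : Fin 3) (i : Fin 3) :
    ninePt ε a b ≠ ![e₀, e₁, e₂] i := by
  fin_cases i
  · exact mk_ne_mk _ _ _ _ 2 (by simp) (by simp)
  · exact mk_ne_mk _ _ _ _ 2 (by simp) (by simp)
  · exact mk_ne_mk _ _ _ _ 0 (by simp) (by simp [pow_ne_zero _ hne0])

lemma e₀_ne_e₁ : e₀ ≠ e₁ := by
  unfold e₀ e₁; exact mk_ne_mk _ _ _ _ 0 (by simp) (by simp)

lemma e₀_ne_e₂ : e₀ ≠ e₂ := by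
  unfold e₀ e₂; exact mk_ne_mk _ _ _ _ 0 (by simp) (by simp)

lemma e₁_ne_e₂ : e₁ ≠ e₂ := by
  unfold e₁ e₂; exact mk_ne_mk _ _ _ _ 1 (by simp) (by simp)

lemma e_ne_e {i j : Fin 3} (hij : i ≠ j) :
    (![e₀, e₁, e₂] : Fin 3 → Projectivization ℂ (Fin 3 → ℂ)) i ≠ ![e₀, e₁, e₂] j := by
  fin_cases i <;> fin_cases j <;>
    simp only [Fin.mk_zero, Fin.mk_one, Matrix.cons_val_zero, Matrix.cons_val_one,
      Matrix.head_cons, Matrix.cons_val_two, Matrix.tail_cons] <;>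
    first
      | exact absurd rfl hij
      | exact e₀_ne_e₁
      | exact e₀_ne_e₂
      | exact e₁_ne_e₂
      | exact e₀_ne_e₁.symm
      | exact e₀_ne_e₂.symm
      | exact e₁_ne_e₂.symm

lemma g_inj (hε : IsPrimitiveRoot ε 3) : Function.Injective (g ε) := by
  have hne0 : ε ≠ 0 := hε.ne_zero (by norm_num)
  rintro (⟨a, b⟩ | i) (⟨a', b'⟩ | j) h
  · simp only [g, ninePt, Projectivization.mk_eq_mk_iff'] at h
    obtain ⟨t, ht⟩ := h
    have h2 := congrFun ht 2
    simp at h2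
    have h0 := congrFun ht 0
    have h1 := congrFun ht 1
    simp [h2] at h0 h1
    obtain rfl : a = a' := pow_inj' hε h0.symm
    obtain rfl : b = b' := pow_inj' hε h1.symm
    rfl
  · exact absurd h (nine_ne_e hne0 a b j)
  · exact absurd h.symm (nine_ne_e hne0 a' b' i)
  · obtain rfl : i = j := by
      by_contra hij
      exact e_ne_e hij h
    rfl

end inj

end DualHesse

open DualHesse Projectivization

theorem dual_hesse_singular_points (ε : ℂ) (hε : IsPrimitiveRoot ε 3) :
    {P : Projectivization ℂ (Fin 3 → ℂ) |
        2 ≤ Set.ncard {p : Fin 3 × Fin 3 | onFermatLine ε p P}} =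
      ({P : Projectivization ℂ (Fin 3 → ℂ) | ∃ a b : Fin 3,
          P = Projectivization.mk ℂ ![ε ^ (a : ℕ), ε ^ (b : ℕ), 1]
                (by intro h; simpa using congrFun h 2)} ∪
        {Projectivization.mk ℂ ![1, 0, 0] (by intro h; simpa using congrFun h 0),
         Projectivization.mk ℂ ![0, 1, 0] (by intro h; simpa using congrFun h 1),
         Projectivization.mk ℂ ![0, 0, 1] (by intro h; simpa using congrFun h 2)}) ∧
    Set.ncard {P : Projectivization ℂ (Fin 3 → ℂ) |
        2 ≤ Set.ncard {p : Fin 3 × Fin 3 | onFermatLine ε p P}} = 12 := by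
  have h3 : ε ^ 3 = 1 := hε.pow_eq_one
  have hset : {P : Projectivization ℂ (Fin 3 → ℂ) |
      2 ≤ Set.ncard {p : Fin 3 × Fin 3 | onFermatLine ε p P}} = Set.range (g ε) := by
    ext P
    simp only [Set.mem_setOf_eq, Set.mem_range]
    constructor
    · intro h
      obtain ⟨p, q, hp, hq, hpq⟩ := (Set.one_lt_ncard_iff (Set.toFinite _)).1 h
      have := main_forward P.rep_nonzero hε p q hpq hp hq
      rcases this with ⟨a, b, hm⟩ | hm | hm | hm
      · exact ⟨.inl (a, b), hm.symm.trans (Projectivization.mk_rep P)⟩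
      · exact ⟨.inr 0, hm.symm.trans (Projectivization.mk_rep P)⟩
      · exact ⟨.inr 1, hm.symm.trans (Projectivization.mk_rep P)⟩
      · exact ⟨.inr 2, hm.symm.trans (Projectivization.mk_rep P)⟩
    · rintro ⟨x, rfl⟩
      rcases x with ⟨a, b⟩ | i
      · exact two_le_ncard (1, b) (2, -a)
          (by intro h; rw [Prod.mk.injEq] at h; exact absurd h.1 (by decide))
          (on_ninePt h3 a b).1 (on_ninePt h3 a b).2
      · fin_cases i
        · exact two_le_ncard (1, 0) (1, 1) (by decide) (on_e₀ 0) (on_e₀ 1)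
        · exact two_le_ncard (2, 0) (2, 1) (by decide) (on_e₁ 0) (on_e₁ 1)
        · exact two_le_ncard (0, 0) (0, 1) (by decide) (on_e₂ 0) (on_e₂ 1)
  constructor
  · rw [hset]
    ext P
    simp only [Set.mem_range, Set.mem_union, Set.mem_setOf_eq, Set.mem_insert_iff,
      Set.mem_singleton_iff]
    constructor
    · rintro ⟨(⟨a, b⟩ | i), rfl⟩
      · exact Or.inl ⟨a, b, rfl⟩
      · fin_cases i
        · exact Or.inr (Or.inl rfl)
        · exact Or.inr (Or.inr (Or.inl rfl))
        · exact Or.inr (Or.inr (Or.inr rfl))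
    · rintro (⟨a, b, rfl⟩ | rfl | rfl | rfl)
      · exact ⟨.inl (a, b), rfl⟩
      · exact ⟨.inr 0, rfl⟩
      · exact ⟨.inr 1, rfl⟩
      · exact ⟨.inr 2, rfl⟩
  · rw [hset, ← Nat.card_coe_set_eq, Nat.card_range_of_injective (g_inj hε)]
    simp
end
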